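/- Let H be an r-graph on [n], x = (x₁,...,x_n) a point of the standard simplex with β := r! · P_H(x) > 0, and let (X₁,...,X_r) be the random ordered edge with P[(X₁,...,X_r) = (i₁,...,i_r)] = x_{i₁}⋯x_{i_r}/β for each ordered tuple (i₁,...,i_r) whose underlying set is an edge of H. If moreover x is an optimal solution of the Lagrangian of H, then H(X₁,...,X_r) − r·H(X₁) = log β, where H(·) denotes Shannon entropy. -/

import Mathlib

open Finset

lemma img_cons {n m : ℕ} (j : Fin n) (s : Fin m → Fin n) :
    Finset.image (Fin.cons j s) Finset.univ = insert j (Finset.image s Finset.univ) := by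
  ext a
  simp only [Finset.mem_image, Finset.mem_insert, Finset.mem_univ, true_and]
  constructor
  · rintro ⟨k, rfl⟩
    rcases Fin.eq_zero_or_eq_succ k with rfl | ⟨i, rfl⟩
    · left; simp
    · right; exact ⟨i, by simp⟩
  · rintro (rfl | ⟨k, rfl⟩)
    · exact ⟨0, by simp⟩
    · exact ⟨k.succ, by simp⟩

lemma inj_of_image {n m : ℕ} {t : Fin m → Fin n} {e : Finset (Fin n)}
    (h : Finset.image t Finset.univ = e) (he : e.card = m) : Function.Injective t := by
  have : Set.InjOn t (Finset.univ : Finset (Fin m)) := by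
    rw [← Finset.card_image_iff, h, he, Finset.card_univ, Fintype.card_fin]
  rw [Finset.coe_univ] at this
  exact fun a b hab => this (Set.mem_univ a) (Set.mem_univ b) hab

lemma img_tail {n m : ℕ} {t : Fin (m+1) → Fin n} (hinj : Function.Injective t) :
    Finset.image (t ∘ Fin.succ) Finset.univ = (Finset.image t Finset.univ).erase (t 0) := by
  ext a
  simp only [Finset.mem_image, Finset.mem_erase, Finset.mem_univ, true_and, Function.comp]
  constructor
  · rintro ⟨k, rfl⟩
    refine ⟨fun h => ?_, ⟨k.succ, rfl⟩⟩
    exact (Fin.succ_ne_zero k) (hinj h)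
  · rintro ⟨hne, k, rfl⟩
    rcases Fin.eq_zero_or_eq_succ k with rfl | ⟨i, rfl⟩
    · exact absurd rfl hne
    · exact ⟨i, rfl⟩

lemma fiber_card {n m : ℕ} (e : Finset (Fin n)) (he : e.card = m + 1) (j : Fin n) (hj : j ∈ e) :
    ((Finset.univ : Finset (Fin (m+1) → Fin n)).filter
        (fun t => Finset.image t Finset.univ = e ∧ t 0 = j)).card
      = ((Finset.univ : Finset (Fin m → Fin n)).filter
        (fun s => Finset.image s Finset.univ = e.erase j)).card := by
  apply Finset.card_bij (fun t _ => t ∘ Fin.succ)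
  · intro t ht
    simp only [Finset.mem_filter, Finset.mem_univ, true_and] at ht ⊢
    obtain ⟨h1, h2⟩ := ht
    rw [img_tail (inj_of_image h1 he), h1, h2]
  · intro t ht t' ht' hh
    simp only [Finset.mem_filter, Finset.mem_univ, true_and] at ht ht'
    funext k
    rcases Fin.eq_zero_or_eq_succ k with rfl | ⟨i, rfl⟩
    · rw [ht.2, ht'.2]
    · exact congrFun hh i
  · intro s hs
    simp only [Finset.mem_filter, Finset.mem_univ, true_and] at hs
    refine ⟨Fin.cons j s, ?_, ?_⟩
    · simp only [Finset.mem_filter, Finset.mem_univ, true_and]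
      refine ⟨?_, Fin.cons_zero _ _⟩
      rw [img_cons, hs, Finset.insert_erase hj]
    · funext i; simp [Fin.cons_succ]

lemma cardA {n : ℕ} : ∀ (m : ℕ) (e : Finset (Fin n)), e.card = m →
    ((Finset.univ : Finset (Fin m → Fin n)).filter
      (fun t => Finset.image t Finset.univ = e)).card = m.factorial := by
  intro m
  induction m with
  | zero =>
    intro e he
    rw [Finset.card_eq_zero] at he
    subst he
    rw [Nat.factorial_zero]
    have h1 : ((Finset.univ : Finset (Fin 0 → Fin n)).filter
        (fun t => Finset.image t Finset.univ = (∅ : Finset (Fin n)))) = Finset.univ := by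
      ext t; simp
    rw [h1, Finset.card_univ]
    exact Fintype.card_eq_one_iff.2 ⟨(Fin.elim0 : Fin 0 → Fin n), fun t => funext fun k => k.elim0⟩
  | succ m ih =>
    intro e he
    have hmaps : ∀ t ∈ (Finset.univ : Finset (Fin (m+1) → Fin n)).filter
        (fun t => Finset.image t Finset.univ = e), t 0 ∈ e := by
      intro t ht
      simp only [Finset.mem_filter, Finset.mem_univ, true_and] at ht
      rw [← ht]; exact Finset.mem_image_of_mem t (Finset.mem_univ 0)
    rw [Finset.card_eq_sum_card_fiberwise hmaps]
    have : ∀ j ∈ e, (((Finset.univ : Finset (Fin (m+1) → Fin n)).filter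
        (fun t => Finset.image t Finset.univ = e)).filter (fun t => t 0 = j)).card
        = m.factorial := by
      intro j hj
      rw [Finset.filter_filter]
      rw [fiber_card e he j hj]
      exact ih _ (by rw [Finset.card_erase_of_mem hj, he]; rfl)
    rw [Finset.sum_congr rfl this, Finset.sum_const, he, Nat.factorial_succ, smul_eq_mul]

lemma cardB {n m : ℕ} (e : Finset (Fin n)) (he : e.card = m + 1) (j : Fin n) (hj : j ∈ e) :
    ((Finset.univ : Finset (Fin (m+1) → Fin n)).filter
        (fun t => Finset.image t Finset.univ = e ∧ t 0 = j)).card = m.factorial := by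
  rw [fiber_card e he j hj]
  exact cardA m _ (by rw [Finset.card_erase_of_mem hj, he]; rfl)

lemma sum_fiber {n m : ℕ} (H : Finset (Finset (Fin n))) (huni : ∀ e ∈ H, e.card = m+1)
    (x : Fin n → ℝ) (j : Fin n) :
    ∑ t ∈ ((Finset.univ : Finset (Fin (m+1) → Fin n)).filter
        (fun t => Finset.image t Finset.univ ∈ H)).filter (fun t => t 0 = j), ∏ k, x (t k)
      = (m.factorial : ℝ) * (x j *
          ∑ e ∈ H.filter (fun e => j ∈ e), ∏ i ∈ e.erase j, x i) := by
  rw [Finset.filter_filter]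
  have hmaps : ∀ t ∈ (Finset.univ : Finset (Fin (m+1) → Fin n)).filter
      (fun t => Finset.image t Finset.univ ∈ H ∧ t 0 = j),
      Finset.image t Finset.univ ∈ H.filter (fun e => j ∈ e) := by
    intro t ht
    simp only [Finset.mem_filter, Finset.mem_univ, true_and] at ht ⊢
    exact ⟨ht.1, ht.2 ▸ Finset.mem_image_of_mem t (Finset.mem_univ 0)⟩
  rw [← Finset.sum_fiberwise_of_maps_to hmaps]
  rw [Finset.mul_sum, Finset.mul_sum]
  apply Finset.sum_congr rfl
  intro e he
  simp only [Finset.mem_filter] at he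
  obtain ⟨heH, hje⟩ := he
  have hset : ((Finset.univ : Finset (Fin (m+1) → Fin n)).filter
      (fun t => Finset.image t Finset.univ ∈ H ∧ t 0 = j)).filter
      (fun t => Finset.image t Finset.univ = e)
      = (Finset.univ : Finset (Fin (m+1) → Fin n)).filter
        (fun t => Finset.image t Finset.univ = e ∧ t 0 = j) := by
    rw [Finset.filter_filter]
    apply Finset.filter_congr
    intro t _
    constructor
    · rintro ⟨⟨_, h2⟩, h3⟩; exact ⟨h3, h2⟩
    · rintro ⟨h1, h2⟩; exact ⟨⟨h1 ▸ heH, h2⟩, h1⟩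
  rw [hset]
  have hprod : ∀ t ∈ (Finset.univ : Finset (Fin (m+1) → Fin n)).filter
      (fun t => Finset.image t Finset.univ = e ∧ t 0 = j),
      ∏ k, x (t k) = ∏ i ∈ e, x i := by
    intro t ht
    simp only [Finset.mem_filter, Finset.mem_univ, true_and] at ht
    have hinj := inj_of_image ht.1 (huni e heH)
    rw [← ht.1, Finset.prod_image (fun a _ b _ h => hinj h)]
  rw [Finset.sum_congr rfl hprod, Finset.sum_const, cardB e (huni e heH) j hje,
    nsmul_eq_mul, ← Finset.mul_prod_erase e x hje]

lemma euler_id {n r : ℕ} (H : Finset (Finset (Fin n))) (huni : ∀ e ∈ H, e.card = r)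
    (x : Fin n → ℝ) :
    ∑ l, x l * ∑ e ∈ H.filter (fun e => l ∈ e), ∏ i ∈ e.erase l, x i
      = (r : ℝ) * ∑ e ∈ H, ∏ i ∈ e, x i := by
  have step : ∀ l : Fin n, x l * ∑ e ∈ H.filter (fun e => l ∈ e), ∏ i ∈ e.erase l, x i
      = ∑ e ∈ H, if l ∈ e then ∏ i ∈ e, x i else 0 := by
    intro l
    rw [Finset.mul_sum, ← Finset.sum_filter]
    apply Finset.sum_congr rfl
    intro e he
    simp only [Finset.mem_filter] at he
    exact Finset.mul_prod_erase e x he.2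
  rw [Finset.sum_congr rfl (fun l _ => step l), Finset.sum_comm, Finset.mul_sum]
  apply Finset.sum_congr rfl
  intro e he
  rw [← Finset.sum_filter]
  have : Finset.univ.filter (fun l => l ∈ e) = e := Finset.filter_univ_mem e
  rw [this, Finset.sum_const, nsmul_eq_mul, huni e he]

lemma perturb_id {n : ℕ} (H : Finset (Finset (Fin n))) (x : Fin n → ℝ) {j l : Fin n}
    (hjl : j ≠ l) (ε : ℝ) :
    ∑ e ∈ H, ∏ i ∈ e, (x i + (if i = j then ε else 0) - (if i = l then ε else 0))
      = ∑ e ∈ H, ∏ i ∈ e, x i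
        + ε * (∑ e ∈ H.filter (fun e => j ∈ e), ∏ i ∈ e.erase j, x i
             - ∑ e ∈ H.filter (fun e => l ∈ e), ∏ i ∈ e.erase l, x i)
        - ε^2 * ∑ e ∈ H.filter (fun e => j ∈ e ∧ l ∈ e), ∏ i ∈ (e.erase j).erase l, x i := by
  set y : Fin n → ℝ := fun i => x i + (if i = j then ε else 0) - (if i = l then ε else 0) with hy
  have hyj : y j = x j + ε := by simp [hy, hjl]
  have hyl : y l = x l - ε := by simp [hy, hjl.symm]
  have hyo : ∀ i, i ≠ j → i ≠ l → y i = x i := by intro i h1 h2; simp [hy, h1, h2]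
  have key : ∀ e ∈ H, ∏ i ∈ e, y i
      = ∏ i ∈ e, x i
        + ε * ((if j ∈ e then ∏ i ∈ e.erase j, x i else 0)
             - (if l ∈ e then ∏ i ∈ e.erase l, x i else 0))
        - ε^2 * (if j ∈ e ∧ l ∈ e then ∏ i ∈ (e.erase j).erase l, x i else 0) := by
    intro e _
    by_cases hj : j ∈ e <;> by_cases hl : l ∈ e
    · have hl' : l ∈ e.erase j := Finset.mem_erase.2 ⟨hjl.symm, hl⟩
      have hj' : j ∈ e.erase l := Finset.mem_erase.2 ⟨hjl, hj⟩
      have hR : ∏ i ∈ (e.erase j).erase l, y i = ∏ i ∈ (e.erase j).erase l, x i := by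
        apply Finset.prod_congr rfl
        intro i hi
        simp only [Finset.mem_erase] at hi
        exact hyo i hi.2.1 hi.1
      have e1 : ∏ i ∈ e, y i = y j * (y l * ∏ i ∈ (e.erase j).erase l, x i) := by
        rw [← Finset.mul_prod_erase e y hj, ← Finset.mul_prod_erase _ y hl', hR]
      have e2 : ∏ i ∈ e, x i = x j * (x l * ∏ i ∈ (e.erase j).erase l, x i) := by
        rw [← Finset.mul_prod_erase e x hj, ← Finset.mul_prod_erase _ x hl']
      have e3 : ∏ i ∈ e.erase j, x i = x l * ∏ i ∈ (e.erase j).erase l, x i :=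
        (Finset.mul_prod_erase _ x hl').symm
      have hcomm : (e.erase l).erase j = (e.erase j).erase l := by
        ext i; simp only [Finset.mem_erase]; tauto
      have e4 : ∏ i ∈ e.erase l, x i = x j * ∏ i ∈ (e.erase j).erase l, x i := by
        rw [← Finset.mul_prod_erase _ x hj', hcomm]
      rw [e1, e2, if_pos hj, if_pos hl, if_pos ⟨hj, hl⟩, e3, e4, hyj, hyl]
      ring
    · have hR : ∏ i ∈ e.erase j, y i = ∏ i ∈ e.erase j, x i := by
        apply Finset.prod_congr rfl
        intro i hi
        simp only [Finset.mem_erase] at hi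
        exact hyo i hi.1 (fun h => hl (h ▸ hi.2))
      rw [← Finset.mul_prod_erase e y hj, hR, ← Finset.mul_prod_erase e x hj,
        if_pos hj, if_neg hl, if_neg (fun h => hl h.2), hyj]
      ring
    · have hR : ∏ i ∈ e.erase l, y i = ∏ i ∈ e.erase l, x i := by
        apply Finset.prod_congr rfl
        intro i hi
        simp only [Finset.mem_erase] at hi
        exact hyo i (fun h => hj (h ▸ hi.2)) hi.1
      rw [← Finset.mul_prod_erase e y hl, hR, ← Finset.mul_prod_erase e x hl,
        if_neg hj, if_pos hl, if_neg (fun h => hj h.1), hyl]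
      ring
    · have hR : ∏ i ∈ e, y i = ∏ i ∈ e, x i := by
        apply Finset.prod_congr rfl
        intro i hi
        exact hyo i (fun h => hj (h ▸ hi)) (fun h => hl (h ▸ hi))
      rw [hR, if_neg hj, if_neg hl, if_neg (fun h => hj h.1)]
      ring
  rw [Finset.sum_congr rfl key]
  rw [Finset.sum_sub_distrib, Finset.sum_add_distrib, ← Finset.mul_sum, ← Finset.mul_sum,
    Finset.sum_sub_distrib, ← Finset.sum_filter, ← Finset.sum_filter, ← Finset.sum_filter]

lemma lagrange {n r : ℕ} (H : Finset (Finset (Fin n))) (huni : ∀ e ∈ H, e.card = r)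
    (x : Fin n → ℝ) (hnn : ∀ i, 0 ≤ x i) (hsum : ∑ i, x i = 1)
    (hopt : ∀ y : Fin n → ℝ, (∀ i, 0 ≤ y i) → ∑ i, y i = 1 →
      ∑ e ∈ H, ∏ i ∈ e, y i ≤ ∑ e ∈ H, ∏ i ∈ e, x i) :
    ∀ j, 0 < x j → ∑ e ∈ H.filter (fun e => j ∈ e), ∏ i ∈ e.erase j, x i
      = (r : ℝ) * ∑ e ∈ H, ∏ i ∈ e, x i := by
  set D : Fin n → ℝ := fun a => ∑ e ∈ H.filter (fun e => a ∈ e), ∏ i ∈ e.erase a, x i with hD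
  have hle : ∀ j l, 0 < x l → D j ≤ D l := by
    intro j l hl
    by_contra hcon
    push_neg at hcon
    have hjl : j ≠ l := by rintro rfl; exact lt_irrefl _ hcon
    set δ : ℝ := D j - D l with hδdef
    have hδ : 0 < δ := by simp only [hδdef]; linarith
    set E : ℝ := ∑ e ∈ H.filter (fun e => j ∈ e ∧ l ∈ e), ∏ i ∈ (e.erase j).erase l, x i
      with hE
    have hEnn : 0 ≤ E := Finset.sum_nonneg fun e _ => Finset.prod_nonneg fun i _ => hnn i
    set c : ℝ := δ / (E + 1) with hc
    have hcpos : 0 < c := div_pos hδ (by linarith)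
    have hcE : c * (E + 1) = δ := div_mul_cancel₀ δ (by linarith)
    set ε : ℝ := min (x l) c with hε
    have hεpos : 0 < ε := lt_min hl hcpos
    have hεl : ε ≤ x l := min_le_left _ _
    have hεc : ε ≤ c := min_le_right _ _
    set y : Fin n → ℝ :=
      fun i => x i + (if i = j then ε else 0) - (if i = l then ε else 0) with hy
    have ynn : ∀ i, 0 ≤ y i := by
      intro i
      by_cases h1 : i = j
      · subst h1; simp [hy, if_neg hjl]; linarith [hnn i]
      · by_cases h2 : i = l
        · subst h2; simp [hy, if_neg h1]; linarith
        · simp [hy, if_neg h1, if_neg h2]; linarith [hnn i]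
    have ysum : ∑ i, y i = 1 := by
      simp only [hy]
      rw [Finset.sum_sub_distrib, Finset.sum_add_distrib, hsum,
        Finset.sum_ite_eq' Finset.univ j (fun _ => ε),
        Finset.sum_ite_eq' Finset.univ l (fun _ => ε)]
      simp
    have hP := hopt y ynn ysum
    rw [hy] at hP
    rw [perturb_id H x hjl ε] at hP
    have hP' : (∑ e ∈ H, ∏ i ∈ e, x i) + ε * (D j - D l) - ε ^ 2 * E
        ≤ ∑ e ∈ H, ∏ i ∈ e, x i := hP
    nlinarith [mul_pos hεpos hcpos, mul_nonneg (mul_nonneg hεpos.le hcpos.le) hEnn,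
      mul_le_mul_of_nonneg_right hεc (mul_nonneg hεpos.le hEnn)]
  intro j hj
  have euler := euler_id H huni x
  have repl : ∀ l : Fin n, x l * D l = x l * D j := by
    intro l
    rcases eq_or_lt_of_le (hnn l) with h | h
    · rw [← h]; ring
    · rw [le_antisymm (hle l j hj) (hle j l h)]
  rw [Finset.sum_congr rfl (fun l _ => repl l), ← Finset.sum_mul, hsum, one_mul] at euler
  exact euler

/-- Entropy identity for an optimal Lagrangian vector: let `H` be an `r`-graph
on `[n]`, `x` a simplex point with `β := r! · P_H(x) > 0`, and let
`(X₁,…,X_r)` be the random ordered edge with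
`P[(X₁,…,X_r) = (i₁,…,i_r)] = x_{i₁}⋯x_{i_r}/β` for each ordered tuple whose
underlying set is an edge of `H`. If `x` is an optimal solution of the
Lagrangian of `H`, then `H(X₁,…,X_r) − r·H(X₁) = log β`, where `H(·)` denotes
Shannon entropy. -/
theorem entropy_of_optimal_solution (n r : ℕ) (hr : 1 ≤ r)
    (H : Finset (Finset (Fin n))) (huniform : ∀ e ∈ H, e.card = r)
    (x : Fin n → ℝ) (hnn : ∀ i, 0 ≤ x i) (hsum : ∑ i, x i = 1)
    (β : ℝ) (hβ : β = (r.factorial : ℝ) * ∑ e ∈ H, ∏ i ∈ e, x i)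
    (hβpos : 0 < β)
    (hopt : ∀ y : Fin n → ℝ, (∀ i, 0 ≤ y i) → ∑ i, y i = 1 →
      ∑ e ∈ H, ∏ i ∈ e, y i ≤ ∑ e ∈ H, ∏ i ∈ e, x i) :
    -- ordered edges, joint distribution `p`, and first marginal `q`
    (fun (OE : Finset (Fin r → Fin n)) (p : (Fin r → Fin n) → ℝ) =>
      ∀ q : Fin n → ℝ,
        (∀ j : Fin n, q j = ∑ t ∈ OE.filter (fun t => t ⟨0, hr⟩ = j), p t) →
        (- ∑ t ∈ OE, p t * Real.log (p t)) -
            (r : ℝ) * (- ∑ j, q j * Real.log (q j)) = Real.log β)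
      (Finset.univ.filter (fun t : Fin r → Fin n => Finset.image t Finset.univ ∈ H))
      (fun t => (∏ k, x (t k)) / β) := by
  obtain ⟨m, rfl⟩ : ∃ m, r = m + 1 := ⟨r - 1, (Nat.succ_pred_eq_of_pos hr).symm⟩
  intro q hq
  have h0 : (⟨0, hr⟩ : Fin (m + 1)) = 0 := rfl
  rw [h0] at hq
  set OE := (Finset.univ : Finset (Fin (m+1) → Fin n)).filter
      (fun t => Finset.image t Finset.univ ∈ H) with hOE
  set P := ∑ e ∈ H, ∏ i ∈ e, x i with hPdef
  have hβ' : β = ((m:ℝ)+1) * (m.factorial : ℝ) * P := by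
    rw [hβ, Nat.factorial_succ]; push_cast; ring
  have F2 := lagrange H huniform x hnn hsum hopt
  have F3 : ∀ j, ∑ t ∈ OE.filter (fun t => t 0 = j), ∏ k, x (t k) = β * x j := by
    intro j
    rw [hOE, sum_fiber H huniform x j]
    rcases eq_or_lt_of_le (hnn j) with h | h
    · rw [← h]; ring
    · rw [F2 j h, hβ']; push_cast; ring
  have hq' : ∀ j, q j = x j := by
    intro j
    rw [hq j, ← Finset.sum_div, F3 j]
    field_simp
  have F5 : ∑ t ∈ OE, ∏ k, x (t k) = β := by
    have hm : ∀ t ∈ OE, t 0 ∈ (Finset.univ : Finset (Fin n)) := fun t _ => Finset.mem_univ _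
    rw [← Finset.sum_fiberwise_of_maps_to hm (fun t => ∏ k, x (t k)),
      Finset.sum_congr rfl (fun j _ => F3 j), ← Finset.mul_sum, hsum, mul_one]
  set T := ∑ j, x j * Real.log (x j) with hT
  have F6 : ∀ k : Fin (m+1), ∑ t ∈ OE, (∏ k', x (t k')) * Real.log (x (t k))
      = β * T := by
    intro k
    have swap_eq : ∑ t ∈ OE, (∏ k', x (t k')) * Real.log (x (t k))
        = ∑ t ∈ OE, (∏ k', x (t k')) * Real.log (x (t 0)) := by
      have hmem : ∀ t ∈ OE, t ∘ (Equiv.swap 0 k) ∈ OE := by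
        intro t ht
        simp only [hOE, Finset.mem_filter, Finset.mem_univ, true_and] at ht ⊢
        have : Finset.image (t ∘ (Equiv.swap 0 k)) Finset.univ
            = Finset.image t Finset.univ := by
          rw [← Finset.image_image]
          congr 1
          exact Finset.image_univ_equiv _
        rwa [this]
      have hinv : ∀ t : Fin (m+1) → Fin n, (t ∘ (Equiv.swap 0 k)) ∘ (Equiv.swap 0 k) = t := by
        intro t; funext i; simp [Function.comp, Equiv.swap_apply_self]
      apply Finset.sum_nbij' (fun t => t ∘ (Equiv.swap 0 k)) (fun t => t ∘ (Equiv.swap 0 k))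
        hmem hmem (fun t _ => hinv t) (fun t _ => hinv t)
      intro t _
      have h1 : ∏ k', x ((t ∘ (Equiv.swap 0 k)) k') = ∏ k', x (t k') :=
        Equiv.prod_comp (Equiv.swap 0 k) (fun k' => x (t k'))
      have h2 : (t ∘ (Equiv.swap 0 k)) 0 = t k := by
        simp [Function.comp, Equiv.swap_apply_left]
      rw [h1, h2]
    rw [swap_eq]
    have hm : ∀ t ∈ OE, t 0 ∈ (Finset.univ : Finset (Fin n)) := fun t _ => Finset.mem_univ _
    rw [← Finset.sum_fiberwise_of_maps_to hm
      (fun t => (∏ k', x (t k')) * Real.log (x (t 0)))]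
    have inner : ∀ j : Fin n, ∑ t ∈ OE.filter (fun t => t 0 = j),
        (∏ k', x (t k')) * Real.log (x (t 0)) = β * (x j * Real.log (x j)) := by
      intro j
      have : ∀ t ∈ OE.filter (fun t => t 0 = j),
          (∏ k', x (t k')) * Real.log (x (t 0))
            = (∏ k', x (t k')) * Real.log (x j) := by
        intro t ht
        simp only [Finset.mem_filter] at ht
        rw [ht.2]
      rw [Finset.sum_congr rfl this, ← Finset.sum_mul, F3 j]
      ring
    rw [Finset.sum_congr rfl (fun j _ => inner j), ← Finset.mul_sum]
  -- pointwise entropy identity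
  have Fpt : ∀ t ∈ OE, ((∏ k, x (t k)) / β) * Real.log ((∏ k, x (t k)) / β)
      = (∑ k, ((∏ k', x (t k')) * Real.log (x (t k))) / β)
        - ((∏ k, x (t k)) / β) * Real.log β := by
    intro t _
    have hann : (0:ℝ) ≤ ∏ k, x (t k) := Finset.prod_nonneg fun k _ => hnn _
    rcases eq_or_lt_of_le hann with h | h
    · rw [← h]; simp
    · have hx : ∀ k : Fin (m+1), x (t k) ≠ 0 := by
        intro k hk
        exact absurd (Finset.prod_eq_zero (Finset.mem_univ k) hk) (ne_of_gt h)
      rw [Real.log_div (ne_of_gt h) (ne_of_gt hβpos),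
        Real.log_prod (s := Finset.univ) (f := fun k => x (t k)) (fun k _ => hx k),
        mul_sub, Finset.mul_sum]
      congr 1
      apply Finset.sum_congr rfl
      intro k _
      rw [div_mul_eq_mul_div]
  have main1 : ∑ t ∈ OE, ((∏ k, x (t k)) / β) * Real.log ((∏ k, x (t k)) / β)
      = ((m:ℝ)+1) * T - Real.log β := by
    rw [Finset.sum_congr rfl Fpt, Finset.sum_sub_distrib, Finset.sum_comm]
    have inner : ∀ k : Fin (m+1), ∑ t ∈ OE, ((∏ k', x (t k')) * Real.log (x (t k))) / β
        = T := by
      intro k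
      rw [← Finset.sum_div, F6 k, mul_div_assoc]
      field_simp
    rw [Finset.sum_congr rfl (fun k _ => inner k), Finset.sum_const, Finset.card_univ,
      Fintype.card_fin, nsmul_eq_mul]
    have second : ∑ t ∈ OE, ((∏ k, x (t k)) / β) * Real.log β = Real.log β := by
      rw [← Finset.sum_mul, ← Finset.sum_div, F5, div_self (ne_of_gt hβpos), one_mul]
    rw [second]
    push_cast
    ring
  rw [main1]
  have hqT : ∑ j, q j * Real.log (q j) = T := by
    apply Finset.sum_congr rfl
    intro j _
    rw [hq' j]
  rw [hqT]
  push_cast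
  ring
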